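/- For every finite subset A of M, cov(A) ≤ (1 + log|A|) · max_{x,y ∈ A} E_x T(y). -/

import Mathlib

open MeasureTheory ENNReal NNReal

namespace CoverTime

noncomputable section

/-- A (time-homogeneous) Markov chain on a state space `M`, described by the family of
laws `P x` of the trajectory `(X_n)_{n ≥ 0}` started at `x`, on the path space `ℕ → M`,
together with its transition kernel `K`. -/
structure Chain (M : Type*) [MeasurableSpace M] where
  P : M → Measure (ℕ → M)
  prob : ∀ x, IsProbabilityMeasure (P x)
  K : M → M → ℝ≥0∞
  K_row : ∀ x, ∑' y, K x y = 1
  start : ∀ x, P x {ω | ω 0 = x} = 1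
  markov : ∀ (x : M) (path : ℕ → M) (n : ℕ),
    P x {ω | ∀ i ≤ n + 1, ω i = path i}
      = P x {ω | ∀ i ≤ n, ω i = path i} * K (path n) (path (n + 1))

variable {M : Type*}

/-- Hitting time `T(A) = inf {n ≥ 0 : X_n ∈ A}` of a set `A`, with value `∞` if `A` is
never hit. -/
def hitTime (A : Set M) (ω : ℕ → M) : ℝ≥0∞ :=
  ⨅ n ∈ {n : ℕ | ω n ∈ A}, (n : ℝ≥0∞)

/-- The `k`-th return time `T^k(x)`: `T^0(x) = 0` and
`T^k(x) = inf {n ≥ T^{k-1}(x) + 1 : X_n = x}`. -/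
def retTime (x : M) : ℕ → (ℕ → M) → ℝ≥0∞
  | 0 => fun _ => 0
  | k + 1 => fun ω => ⨅ n ∈ {n : ℕ | retTime x k ω < (n : ℝ≥0∞) ∧ ω n = x}, (n : ℝ≥0∞)

/-- Number of visits to `y` (strictly) before time `t`, i.e. `N_t(y)`. -/
def visits (y : M) (t : ℝ≥0∞) (ω : ℕ → M) : ℝ≥0∞ :=
  ∑' n : ℕ, Set.indicator {n : ℕ | (n : ℝ≥0∞) < t ∧ ω n = y} (fun _ => (1 : ℝ≥0∞)) n

variable [MeasurableSpace M]

/-- Expectation `E_x f` of a nonnegative path functional under `P_x`. -/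
def E (c : Chain M) (x : M) (f : (ℕ → M) → ℝ≥0∞) : ℝ≥0∞ :=
  ∫⁻ ω, f ω ∂(c.P x)

/-- The expected hitting time `E_x T(y)`. -/
def eHit (c : Chain M) (x y : M) : ℝ≥0∞ := E c x (hitTime {y})

/-- The commute distance `d(x,y) = E_x T(y) + E_y T(x)`. -/
def commuteDist (c : Chain M) (x y : M) : ℝ≥0∞ := eHit c x y + eHit c y x

/-- `T_cov(A) = sup_{x ∈ A} T(x)`, the first time every point of `A` has been visited. -/
def coverTime (A : Set M) (ω : ℕ → M) : ℝ≥0∞ := ⨆ x ∈ A, hitTime {x} ω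

/-- The cover time `cov(A) = sup_{x ∈ A} E_x T_cov(A)`. -/
def cov (c : Chain M) (A : Set M) : ℝ≥0∞ := ⨆ x ∈ A, E c x (coverTime A)

/-- `cov_-(A) = min_{x ∈ A} E_x T_cov(A)`. -/
def covMinus (c : Chain M) (A : Set M) : ℝ≥0∞ := ⨅ x ∈ A, E c x (coverTime A)

/-- Irreducibility of the chain. -/
def Irreducible (c : Chain M) : Prop := ∀ x y : M, ∃ n : ℕ, 0 < c.P x {ω | ω n = y}

/-- Positive recurrence: every state has finite expected return time. -/
def PositiveRecurrent (c : Chain M) : Prop := ∀ x : M, E c x (retTime x 1) < ∞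

/-- `π` is an invariant probability measure for the chain. -/
def Invariant (c : Chain M) (π : M → ℝ≥0∞) : Prop :=
  (∑' x, π x = 1) ∧ ∀ y, ∑' x, π x * c.K x y = π y

/-- Reversibility with respect to `π`: `π(x) P(x,y) = π(y) P(y,x)`. -/
def Reversible (c : Chain M) (π : M → ℝ≥0∞) : Prop :=
  ∀ x y, π x * c.K x y = π y * c.K y x

/-- Diameter of a set with respect to an `ℝ≥0∞`-valued distance. -/
def setDiam (d : M → M → ℝ≥0∞) (B : Set M) : ℝ≥0∞ := ⨆ x ∈ B, ⨆ y ∈ B, d x y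

/-- The sequence `N_0 = 1`, `N_n = 2^(2^n)` for `n ≥ 1`. -/
def Nseq : ℕ → ℕ
  | 0 => 1
  | n + 1 => 2 ^ 2 ^ (n + 1)

/-- An admissible sequence of partitions of `A`: `𝒜_{n+1}` refines `𝒜_n` and
`|𝒜_n| ≤ N_n` for every `n`.  The partition `𝒜_n` is encoded by the map
`cell n` sending `x ∈ A` to the element `A_n(x)` of `𝒜_n` containing it. -/
structure AdmissibleSeq {M : Type*} (A : Set M) where
  cell : ℕ → M → Set M
  self_mem : ∀ n, ∀ x ∈ A, x ∈ cell n x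
  cell_subset : ∀ n, ∀ x ∈ A, cell n x ⊆ A
  compatible : ∀ n, ∀ x ∈ A, ∀ y ∈ A, cell n x = cell n y ∨ Disjoint (cell n x) (cell n y)
  refines : ∀ n, ∀ x ∈ A, cell (n + 1) x ⊆ cell n x
  finite : ∀ n, {B : Set M | ∃ x ∈ A, B = cell n x}.Finite
  card_le : ∀ n, {B : Set M | ∃ x ∈ A, B = cell n x}.ncard ≤ Nseq n

/-- Talagrand's functional `γ₂(A, d) = inf sup_x Σ_n 2^{n/2} Δ(A_n(x), d)`, the infimum
running over admissible sequences of partitions of `A`. -/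
def gamma2 {M : Type*} (d : M → M → ℝ≥0∞) (A : Set M) : ℝ≥0∞ :=
  ⨅ 𝒜 : AdmissibleSeq A, ⨆ x ∈ A,
    ∑' n : ℕ, (2 : ℝ≥0∞) ^ ((n : ℝ) / 2) * setDiam d (𝒜.cell n x)

/-- Talagrand's functional `γ₁(A, d) = inf sup_x Σ_n 2^n Δ(A_n(x), d)`. -/
def gamma1 {M : Type*} (d : M → M → ℝ≥0∞) (A : Set M) : ℝ≥0∞ :=
  ⨅ 𝒜 : AdmissibleSeq A, ⨆ x ∈ A,
    ∑' n : ℕ, (2 : ℝ≥0∞) ^ n * setDiam d (𝒜.cell n x)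

/-- Talagrand's growth condition for a set functional `F`, with parameters `r` and `τ`. -/
def GrowthCondition {M : Type*} (d : M → M → ℝ≥0∞) (F : Set M → ℝ≥0∞)
    (r : ℝ≥0∞) (τ : ℕ) : Prop :=
  ∀ (n : ℕ) (a : ℝ≥0∞), 0 < a →
    ∀ H : Fin (Nseq (n + τ)) → Set M,
      (∀ i, (H i).Nonempty) →
      setDiam d (⋃ i, H i) ≤ r * a →
      (∀ i j, i ≠ j → ∀ x ∈ H i, ∀ y ∈ H j, a ≤ d x y) →
      (∀ i, setDiam d (H i) ≤ a / r) →
      a * 2 ^ n + ⨅ i, F (H i) ≤ F (⋃ i, H i)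




section Aux

variable [Countable M]

def eqv (x z : M) : Prop := ∀ S : Set M, MeasurableSet S → (x ∈ S ↔ z ∈ S)

lemma eqv_refl (x : M) : eqv x x := fun _ _ => Iff.rfl
lemma eqv_symm {x z : M} (h : eqv x z) : eqv z x := fun S hS => (h S hS).symm
lemma eqv_trans {x y z : M} (h : eqv x y) (h' : eqv y z) : eqv x z :=
  fun S hS => (h S hS).trans (h' S hS)

def cls (x : M) : Set M := {z | eqv x z}

lemma mem_cls_self (x : M) : x ∈ cls x := eqv_refl x

lemma cls_eq_of_eqv {x z : M} (h : eqv x z) : cls x = cls z := by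
  ext w; exact ⟨fun hw => eqv_trans (eqv_symm h) hw, fun hw => eqv_trans h hw⟩

lemma measurableSet_cls  (x : M) : MeasurableSet (cls x) := by
  classical
  have hsep : ∀ z : M, ¬ eqv x z → ∃ S : Set M, MeasurableSet S ∧ x ∈ S ∧ z ∉ S := by
    intro z hz
    simp only [eqv, not_forall] at hz
    obtain ⟨S, hS, hiff⟩ := hz
    by_cases hx : x ∈ S
    · exact ⟨S, hS, hx, fun hzS => hiff ⟨fun _ => hzS, fun _ => hx⟩⟩
    · refine ⟨Sᶜ, hS.compl, hx, fun hzc => ?_⟩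
      exact hiff ⟨fun h => absurd h hx, fun h => absurd h hzc⟩
  choose Ssep hmeas hxmem hznot using hsep
  have hset : cls x = ⋂ (z : M), ⋂ (h : ¬ eqv x z), Ssep z h := by
    ext w
    simp only [Set.mem_iInter]
    constructor
    · intro hw z h
      exact (hw (Ssep z h) (hmeas z h)).mp (hxmem z h)
    · intro hw
      by_contra hne
      exact hznot w hne (hw w hne)
  rw [hset]
  exact MeasurableSet.iInter fun z => MeasurableSet.iInter fun h => hmeas z h

def PathInv (E : Set (ℕ → M)) : Prop :=
  ∀ ω ω' : ℕ → M, (∀ i, eqv (ω i) (ω' i)) → ω ∈ E → ω' ∈ E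

lemma pathInv_of_measurableSet {E : Set (ℕ → M)} (h : MeasurableSet E) : PathInv E := by
  let m' : MeasurableSpace (ℕ → M) :=
    { MeasurableSet' := PathInv
      measurableSet_empty := fun ω ω' _ hω => hω.elim
      measurableSet_compl := by
        intro E hE ω ω' hc hω hω'
        exact hω (hE ω' ω (fun i => eqv_symm (hc i)) hω')
      measurableSet_iUnion := by
        intro f hf ω ω' hc hω
        obtain ⟨i, hi⟩ := Set.mem_iUnion.mp hω
        exact Set.mem_iUnion.mpr ⟨i, hf i ω ω' hc hi⟩ }
  have hle : (MeasurableSpace.pi : MeasurableSpace (ℕ → M)) ≤ m' := by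
    apply iSup_le
    intro i s hs
    obtain ⟨S, hS, rfl⟩ := hs
    intro ω ω' hc hω
    exact (hc i S hS).mp hω
  exact hle E h

lemma measure_sat (μ : Measure (ℕ → M)) {E S : Set (ℕ → M)} (hS : MeasurableSet S)
    (hES : E ⊆ S) (hsat : ∀ ω' ∈ S, ∃ ω ∈ E, ∀ i, eqv (ω i) (ω' i)) : μ E = μ S := by
  refine le_antisymm (measure_mono hES) ?_
  have h1 : S ⊆ toMeasurable μ E := by
    intro ω' hω'
    obtain ⟨ω, hωE, hc⟩ := hsat ω' hω'
    exact pathInv_of_measurableSet (measurableSet_toMeasurable μ E) ω ω' hc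
      (subset_toMeasurable μ E hωE)
  calc μ S ≤ μ (toMeasurable μ E) := measure_mono h1
    _ = μ E := measure_toMeasurable E

def clsCyl (n : ℕ) (p : ℕ → M) : Set (ℕ → M) := {ω | ∀ i ≤ n, ω i ∈ cls (p i)}

lemma measurableSet_clsCyl  (n : ℕ) (p : ℕ → M) :
    MeasurableSet (clsCyl n p) := by
  have : clsCyl n p = ⋂ (i : ℕ), ⋂ (_ : i ≤ n), (fun ω : ℕ → M => ω i) ⁻¹' cls (p i) := by
    ext ω; simp [clsCyl, Set.mem_iInter]
  rw [this]
  exact MeasurableSet.iInter fun i => MeasurableSet.iInter fun _ =>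
    measurable_pi_apply i (measurableSet_cls (p i))

lemma cyl_sat  (μ : Measure (ℕ → M)) (n : ℕ) (p : ℕ → M) :
    μ {ω | ∀ i ≤ n, ω i = p i} = μ (clsCyl n p) := by
  apply measure_sat μ (measurableSet_clsCyl n p)
  · intro ω hω i hi
    rw [hω i hi]; exact mem_cls_self _
  · intro ω' hω'
    refine ⟨fun i => if i ≤ n then p i else ω' i, fun i hi => if_pos hi, fun i => ?_⟩
    by_cases hi : i ≤ n
    · simp only [if_pos hi]
      exact hω' i hi
    · simp only [if_neg hi]
      exact eqv_refl _

lemma clsCyl_markov  (c : Chain M) (x : M) (p : ℕ → M) (n : ℕ) :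
    c.P x (clsCyl (n + 1) p) = c.P x (clsCyl n p) * c.K (p n) (p (n + 1)) := by
  rw [← cyl_sat, ← cyl_sat]
  exact c.markov x p n

/-- The separation theorem: for an irreducible chain, every subset of the (countable)
state space is measurable. -/
theorem measurableSet_of_irreducible  (c : Chain M)
    (hirr : Irreducible c) (S : Set M) :
    MeasurableSet S := by
  classical
  suffices hcl : ∀ x z : M, eqv x z → x = z by
    have hsing : ∀ y : M, MeasurableSet ({y} : Set M) := by
      intro y
      have h : ({y} : Set M) = cls y := by
        ext w
        simp only [Set.mem_singleton_iff]
        exact ⟨fun h => h ▸ mem_cls_self y, fun hw => (hcl y w hw).symm⟩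
      rw [h]; exact measurableSet_cls y
    have : S = ⋃ y ∈ S, {y} := (Set.biUnion_of_singleton S).symm
    rw [this]
    exact MeasurableSet.biUnion (Set.to_countable S) (fun y _ => hsing y)
  intro c0 z0 he
  by_contra hne
  by_cases hA : ∀ w : M, eqv c0 w
  · -- trivial σ-algebra case
    have hclsuniv : ∀ w : M, cls w = Set.univ := fun w =>
      Set.eq_univ_of_forall (fun u => eqv_trans (eqv_symm (hA w)) (hA u))
    have hK1 : ∀ y z : M, c.K y z = 1 := by
      intro y z
      have h := clsCyl_markov c c0 (fun i => if i = 0 then y else z) 0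
      have h1 : clsCyl (0 + 1) (fun i : ℕ => if i = 0 then y else z) = Set.univ :=
        Set.eq_univ_of_forall (fun ω i _ => by rw [hclsuniv]; trivial)
      have h0 : clsCyl 0 (fun i : ℕ => if i = 0 then y else z) = Set.univ :=
        Set.eq_univ_of_forall (fun ω i _ => by rw [hclsuniv]; trivial)
      haveI := c.prob c0
      rw [h1, h0, measure_univ] at h
      simpa using h.symm
    have hrow := c.K_row c0
    have h2 : (2 : ℝ≥0∞) ≤ ∑' z, c.K c0 z := by
      have : ∑ z ∈ ({c0, z0} : Finset M), c.K c0 z = 2 := by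
        rw [Finset.sum_pair hne, hK1, hK1]; norm_num
      rw [← this]
      exact Summable.sum_le_tsum _ (fun _ _ => zero_le) ENNReal.summable
    rw [hrow] at h2
    exact absurd h2 (by norm_num)
  · push_neg at hA
    obtain ⟨x, hx⟩ := hA
    obtain ⟨n, hn⟩ := hirr x c0
    haveI := c.prob x
    cases n with
    | zero =>
      have hsub : {ω : ℕ → M | ω 0 = c0} ⊆ {ω : ℕ → M | ω 0 ∈ cls c0} :=
        fun ω h => h ▸ mem_cls_self c0
      have hx1 : c.P x {ω : ℕ → M | ω 0 ∈ cls x} = 1 := by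
        refine le_antisymm prob_le_one ?_
        rw [← c.start x]
        exact measure_mono (fun ω h => h ▸ mem_cls_self x)
      have hm : MeasurableSet {ω : ℕ → M | ω 0 ∈ cls x} :=
        measurable_pi_apply 0 (measurableSet_cls x)
      have h0 : c.P x {ω : ℕ → M | ω 0 ∈ cls x}ᶜ = 0 := by
        rw [measure_compl hm (measure_ne_top _ _), hx1, measure_univ, tsub_self]
      have hdisj : {ω : ℕ → M | ω 0 ∈ cls c0} ⊆ {ω : ℕ → M | ω 0 ∈ cls x}ᶜ := by
        intro ω h hcontra
        exact hx (eqv_trans h (eqv_symm hcontra))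
      have hzero : c.P x {ω : ℕ → M | ω 0 = c0} = 0 :=
        le_antisymm (le_trans (measure_mono (hsub.trans hdisj)) h0.le) (zero_le)
      rw [hzero] at hn
      exact absurd hn (lt_irrefl 0)
    | succ N =>
      set p0 : (Fin (N + 1) → M) → ℕ → M :=
        fun v i => if h : i < N + 1 then v ⟨i, h⟩ else c0 with hp0
      have hsub : {ω : ℕ → M | ω (N + 1) = c0} ⊆ ⋃ v, clsCyl (N + 1) (p0 v) := by
        intro ω hω
        refine Set.mem_iUnion.mpr ⟨fun i => ω i.val, fun i hi => ?_⟩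
        by_cases h : i < N + 1
        · simp only [hp0, dif_pos h]
          exact mem_cls_self _
        · have hi' : i = N + 1 := by omega
          subst hi'
          simp only [hp0, dif_neg h]
          exact hω ▸ mem_cls_self c0
      have hpos : ∃ v, 0 < c.P x (clsCyl (N + 1) (p0 v)) := by
        by_contra hall
        push_neg at hall
        have h1 : c.P x {ω : ℕ → M | ω (N + 1) = c0} ≤ ∑' v, c.P x (clsCyl (N + 1) (p0 v)) :=
          (measure_mono hsub).trans (measure_iUnion_le _)
        have h2 : ∑' v, c.P x (clsCyl (N + 1) (p0 v)) = 0 := by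
          simp only [le_zero_iff] at hall
          simp [hall]
        rw [h2] at h1
        exact absurd (lt_of_lt_of_le hn h1) (lt_irrefl 0)
      obtain ⟨v, hv⟩ := hpos
      set p : ℕ → M := p0 v with hp
      have hpN1 : p (N + 1) = c0 := dif_neg (lt_irrefl _)
      set y := p N with hy
      have hP0pos : 0 < c.P x (clsCyl N p) :=
        lt_of_lt_of_le hv (measure_mono (fun ω h i hi => h i (hi.trans (Nat.le_succ N))))
      set P0 := c.P x (clsCyl N p) with hP0
      have hP0ne : P0 ≠ 0 := hP0pos.ne'
      have hP0top : P0 ≠ ⊤ := measure_ne_top _ _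
      have hclsN : ∀ z : M, clsCyl N (Function.update p (N + 1) z) = clsCyl N p := by
        intro z
        unfold clsCyl
        ext ω
        simp only [Set.mem_setOf_eq]
        refine forall_congr' fun i => imp_congr_right fun hi => ?_
        rw [Function.update_of_ne (by omega : i ≠ N + 1)]
      have hupd : ∀ z : M, c.P x (clsCyl (N + 1) (Function.update p (N + 1) z))
          = P0 * c.K y z := by
        intro z
        have h := clsCyl_markov c x (Function.update p (N + 1) z) N
        rw [Function.update_self, Function.update_of_ne (by omega : N ≠ N + 1),
          hclsN z] at h
        exact h
      have hKc0pos : 0 < c.K y c0 := by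
        have h := hupd c0
        have hup : Function.update p (N + 1) c0 = p := by
          rw [← hpN1]; exact Function.update_eq_self _ _
        rw [hup] at h
        rw [h] at hv
        rcases (ENNReal.mul_pos_iff.mp hv) with ⟨_, h2⟩
        exact h2
      have hconst : ∀ z z' : M, eqv z z' → c.K y z = c.K y z' := by
        intro z z' hzz
        have h1 := hupd z
        have h2 := hupd z'
        have hcc : clsCyl (N + 1) (Function.update p (N + 1) z)
            = clsCyl (N + 1) (Function.update p (N + 1) z') := by
          unfold clsCyl
          ext ω
          simp only [Set.mem_setOf_eq]
          refine forall_congr' fun i => imp_congr_right fun hi => ?_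
          by_cases hiN : i = N + 1
          · subst hiN
            rw [Function.update_self, Function.update_self, cls_eq_of_eqv hzz]
          · rw [Function.update_of_ne hiN, Function.update_of_ne hiN]
        rw [hcc, h2] at h1
        exact ((ENNReal.mul_right_inj hP0ne hP0top).mp h1).symm
      letI st : Setoid M := ⟨eqv, ⟨eqv_refl, fun h => eqv_symm h, fun h h' => eqv_trans h h'⟩⟩
      have hpart : clsCyl N p
          = ⋃ q : Quotient st, clsCyl (N + 1) (Function.update p (N + 1) (Quotient.out q)) := by
        apply Set.Subset.antisymm
        · intro ω hω
          refine Set.mem_iUnion.mpr ⟨Quotient.mk st (ω (N + 1)), fun i hi => ?_⟩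
          by_cases hiN : i = N + 1
          · subst hiN
            rw [Function.update_self]
            exact (Quotient.exact (Quotient.out_eq (Quotient.mk st (ω (N + 1)))) : eqv _ _)
          · rw [Function.update_of_ne hiN]
            exact hω i (by omega)
        · refine Set.iUnion_subset fun q ω hω i hi => ?_
          have := hω i (hi.trans (Nat.le_succ N))
          rwa [Function.update_of_ne (by omega : i ≠ N + 1)] at this
      have hdisj : Pairwise (Function.onFun Disjoint fun q : Quotient st =>
          clsCyl (N + 1) (Function.update p (N + 1) (Quotient.out q))) := by
        intro q q' hqq
        rw [Function.onFun, Set.disjoint_left]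
        intro ω h1 h2
        have e1 := h1 (N + 1) le_rfl
        have e2 := h2 (N + 1) le_rfl
        rw [Function.update_self] at e1 e2
        have heq : eqv (Quotient.out q) (Quotient.out q') := eqv_trans e1 (eqv_symm e2)
        exact hqq (by
          rw [← Quotient.out_eq q, ← Quotient.out_eq q']
          exact Quotient.sound heq)
      have hsum : P0 = ∑' q : Quotient st, P0 * c.K y (Quotient.out q) := by
        calc P0 = c.P x (⋃ q : Quotient st,
            clsCyl (N + 1) (Function.update p (N + 1) (Quotient.out q))) := by rw [← hpart]
        _ = ∑' q : Quotient st, c.P x (clsCyl (N + 1) (Function.update p (N + 1) (Quotient.out q))) :=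
            measure_iUnion hdisj (fun q => measurableSet_clsCyl _ _)
        _ = ∑' q : Quotient st, P0 * c.K y (Quotient.out q) := tsum_congr fun q => hupd _
      have hsum1 : ∑' q : Quotient st, c.K y (Quotient.out q) = 1 := by
        rw [ENNReal.tsum_mul_left] at hsum
        have : P0 * 1 = P0 * ∑' q : Quotient st, c.K y (Quotient.out q) := by
          rw [mul_one]; exact hsum
        exact ((ENNReal.mul_right_inj hP0ne hP0top).mp this).symm
      have hgroup : ∑' z : M, c.K y z
          = ∑' q : Quotient st, ∑' z : {z : M // Quotient.mk st z = q}, c.K y z.val := by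
        rw [← ENNReal.tsum_sigma]
        exact ((Equiv.sigmaFiberEquiv (fun z : M => Quotient.mk st z)).tsum_eq
          (fun z => c.K y z)).symm
      have hperq : ∀ q : Quotient st,
          c.K y (Quotient.out q) + (if q = Quotient.mk st c0 then c.K y c0 else 0)
            ≤ ∑' z : {z : M // Quotient.mk st z = q}, c.K y z.val := by
        intro q
        by_cases hq : q = Quotient.mk st c0
        · subst hq
          set o := Quotient.out (Quotient.mk st c0) with ho
          by_cases hoc : o = c0
          · -- use z0 as the second element
            have hwq : Quotient.mk st z0 = Quotient.mk st c0 := Quotient.sound (eqv_symm he)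
            have hKw : c.K y z0 = c.K y c0 := hconst z0 c0 (eqv_symm he)
            rw [if_pos rfl, ← hKw]
            have hne2 : (⟨o, Quotient.out_eq _⟩ : {z : M // Quotient.mk st z = Quotient.mk st c0})
                ≠ ⟨z0, hwq⟩ := by
              simp only [ne_eq, Subtype.mk.injEq]
              rw [hoc]; exact hne
            calc c.K y o + c.K y z0
                = ∑ z ∈ ({⟨o, Quotient.out_eq _⟩, ⟨z0, hwq⟩} :
                    Finset {z : M // Quotient.mk st z = Quotient.mk st c0}), c.K y z.val := by
                  rw [Finset.sum_pair hne2]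
              _ ≤ _ := Summable.sum_le_tsum _ (fun _ _ => zero_le) ENNReal.summable
          · -- use c0 as the second element
            have hwq : Quotient.mk st c0 = Quotient.mk st c0 := rfl
            rw [if_pos rfl]
            have hne2 : (⟨o, Quotient.out_eq _⟩ : {z : M // Quotient.mk st z = Quotient.mk st c0})
                ≠ ⟨c0, hwq⟩ := by
              simp only [ne_eq, Subtype.mk.injEq]
              exact hoc
            calc c.K y o + c.K y c0
                = ∑ z ∈ ({⟨o, Quotient.out_eq _⟩, ⟨c0, hwq⟩} :
                    Finset {z : M // Quotient.mk st z = Quotient.mk st c0}), c.K y z.val := by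
                  rw [Finset.sum_pair hne2]
              _ ≤ _ := Summable.sum_le_tsum _ (fun _ _ => zero_le) ENNReal.summable
        · rw [if_neg hq, add_zero]
          exact ENNReal.le_tsum (⟨Quotient.out q, Quotient.out_eq q⟩ :
            {z : M // Quotient.mk st z = q})
      have hfinal : 1 + c.K y c0 ≤ 1 := by
        calc 1 + c.K y c0
            = (∑' q : Quotient st, c.K y (Quotient.out q))
              + ∑' q : Quotient st, (if q = Quotient.mk st c0 then c.K y c0 else 0) := by
              rw [hsum1, tsum_ite_eq]
          _ = ∑' q : Quotient st,
              (c.K y (Quotient.out q) + (if q = Quotient.mk st c0 then c.K y c0 else 0)) :=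
              (ENNReal.tsum_add).symm
          _ ≤ ∑' q : Quotient st, ∑' z : {z : M // Quotient.mk st z = q}, c.K y z.val :=
              ENNReal.tsum_le_tsum hperq
          _ = ∑' z : M, c.K y z := hgroup.symm
          _ = 1 := c.K_row y
      have : c.K y c0 ≤ 0 := by
        have h := hfinal
        rwa [← add_zero (1 : ℝ≥0∞), add_assoc, zero_add,
          ENNReal.add_le_add_iff_left one_ne_top] at h
      exact absurd (le_antisymm this (zero_le)) hKc0pos.ne'


/-! ### Part II basics -/

/-- Exact cylinder. -/
def cylSet (n : ℕ) (p : ℕ → M) : Set (ℕ → M) := {ω | ∀ i ≤ n, ω i = p i}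

/-- No visit to `s` in the time window `[m, m+k]`. -/
def ZS (s : M) (m k : ℕ) : Set (ℕ → M) := {ω | ∀ i ≤ k, ω (m + i) ≠ s}

/-- `g z k = P_z(no visit to s up to time k)`. -/
def gfun (c : Chain M) (s z : M) (k : ℕ) : ℝ≥0∞ := c.P z {ω | ∀ i ≤ k, ω i ≠ s}

section meas

lemma measSet_coord (hms : ∀ S : Set M, MeasurableSet S) (i : ℕ) (S : Set M) : MeasurableSet {ω : ℕ → M | ω i ∈ S} :=
  measurable_pi_apply i (hms S)

lemma measSet_forall_le {n : ℕ} {Q : ℕ → Set (ℕ → M)}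
    (h : ∀ i, MeasurableSet (Q i)) : MeasurableSet {ω : ℕ → M | ∀ i ≤ n, ω ∈ Q i} := by
  have : {ω : ℕ → M | ∀ i ≤ n, ω ∈ Q i} = ⋂ (i : ℕ), ⋂ (_ : i ≤ n), Q i := by
    ext ω; simp [Set.mem_iInter]
  rw [this]
  exact MeasurableSet.iInter fun i => MeasurableSet.iInter fun _ => h i

lemma measSet_cyl (hms : ∀ S : Set M, MeasurableSet S) (n : ℕ) (p : ℕ → M) : MeasurableSet (cylSet n p) :=
  measSet_forall_le (fun i => measSet_coord hms i {p i})

lemma measSet_ZS (hms : ∀ S : Set M, MeasurableSet S) (s : M) (m k : ℕ) : MeasurableSet (ZS s m k) :=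
  measSet_forall_le (fun i => measSet_coord hms (m + i) {s}ᶜ)

lemma measSet_noS (hms : ∀ S : Set M, MeasurableSet S) (s : M) (k : ℕ) : MeasurableSet {ω : ℕ → M | ∀ i ≤ k, ω i ≠ s} :=
  measSet_forall_le (fun i => measSet_coord hms i {s}ᶜ)

end meas

lemma ZS_zero_eq (s : M) (k : ℕ) : ZS s 0 k = {ω : ℕ → M | ∀ i ≤ k, ω i ≠ s} := by
  ext ω; simp [ZS]

lemma cylSet_zero (w : M) : cylSet 0 (fun _ => w) = {ω : ℕ → M | ω 0 = w} := by
  ext ω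
  constructor
  · exact fun h => h 0 le_rfl
  · intro h i hi
    have : i = 0 := Nat.le_zero.mp hi
    rw [this]; exact h

lemma cylSet_update_eq (m j : ℕ) (hj : m < j) (p : ℕ → M) (z : M) :
    cylSet m (Function.update p j z) = cylSet m p := by
  ext ω
  refine forall_congr' fun i => imp_congr_right fun hi => ?_
  rw [Function.update_of_ne (by omega : i ≠ j)]

lemma cyl_markov (c : Chain M) (x : M) (p : ℕ → M) (n : ℕ) :
    c.P x (cylSet (n + 1) p) = c.P x (cylSet n p) * c.K (p n) (p (n + 1)) :=
  c.markov x p n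

/-- Start lemma : a path event can be intersected with `{ω 0 = w}` under `P w`. -/
lemma inter_start (c : Chain M) (hms : ∀ S : Set M, MeasurableSet S) (w : M)
    (E : Set (ℕ → M)) (hE : MeasurableSet E) :
    c.P w E = c.P w ({ω | ω 0 = w} ∩ E) := by
  haveI := c.prob w
  have hS : MeasurableSet {ω : ℕ → M | ω 0 = w} := measSet_coord hms 0 {w}
  have hcompl : c.P w {ω : ℕ → M | ω 0 = w}ᶜ = 0 := by
    rw [measure_compl hS (measure_ne_top _ _), c.start w, measure_univ, tsub_self]
  have h1 := measure_inter_add_diff (μ := c.P w) E hS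
  have h2 : c.P w (E \ {ω : ℕ → M | ω 0 = w}) = 0 :=
    le_antisymm (le_trans (measure_mono (Set.diff_subset_compl _ _)) hcompl.le) (zero_le)
  rw [h2, add_zero] at h1
  rw [← h1, Set.inter_comm]

/-- The decomposition of a cylinder-and-no-`s` event according to the next state. -/
lemma ZS_decomp (s : M) (m k : ℕ) (p : ℕ → M) (hpm : p m ≠ s) :
    cylSet m p ∩ ZS s m (k + 1) =
      ⋃ z : {z : M // z ≠ s},
        (cylSet (m + 1) (Function.update p (m + 1) z.val) ∩ ZS s (m + 1) k) := by
  ext ω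
  constructor
  · rintro ⟨hcyl, hzs⟩
    have hz : ω (m + 1) ≠ s := by
      have := hzs 1 (by omega)
      simpa using this
    refine Set.mem_iUnion.mpr ⟨⟨ω (m + 1), hz⟩, ⟨?_, ?_⟩⟩
    · intro i hi
      by_cases him : i = m + 1
      · subst him; rw [Function.update_self]
      · rw [Function.update_of_ne him]
        exact hcyl i (by omega)
    · intro i hi
      have hidx : m + 1 + i = m + (1 + i) := by omega
      rw [hidx]
      exact hzs (1 + i) (by omega)
  · intro hω
    obtain ⟨z, hz⟩ := Set.mem_iUnion.mp hω
    obtain ⟨hcyl, hzs⟩ := hz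
    constructor
    · intro i hi
      have := hcyl i (by omega)
      rwa [Function.update_of_ne (by omega : i ≠ m + 1)] at this
    · intro i hi
      rcases Nat.eq_zero_or_pos i with h0 | hpos
      · subst h0
        have := hcyl m (by omega)
        rw [Function.update_of_ne (by omega : m ≠ m + 1)] at this
        simpa [this] using hpm
      · obtain ⟨j, rfl⟩ : ∃ j, i = 1 + j := ⟨i - 1, by omega⟩
        have hidx : m + (1 + j) = m + 1 + j := by omega
        rw [hidx]
        exact hzs j (by omega)

lemma ZS_decomp_disj (s : M) (m k : ℕ) (p : ℕ → M) :
    Pairwise (Function.onFun Disjoint fun z : {z : M // z ≠ s} =>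
      cylSet (m + 1) (Function.update p (m + 1) z.val) ∩ ZS s (m + 1) k) := by
  intro z z' hzz
  rw [Function.onFun, Set.disjoint_left]
  rintro ω ⟨h1, -⟩ ⟨h2, -⟩
  have e1 := h1 (m + 1) le_rfl
  have e2 := h2 (m + 1) le_rfl
  rw [Function.update_self] at e1 e2
  exact hzz (Subtype.ext (e1 ▸ e2))

/-- The key induction: Markov decomposition for cylinder events followed by no-`s`
windows. -/
lemma cyl_ZS (c : Chain M) (hms : ∀ S : Set M, MeasurableSet S) (s : M) :
    ∀ (k : ℕ) (x : M) (m : ℕ) (p : ℕ → M), p m ≠ s →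
      c.P x (cylSet m p ∩ ZS s m k) = c.P x (cylSet m p) * gfun c s (p m) k := by
  intro k
  induction k with
  | zero =>
    intro x m p hpm
    have h1 : ZS s m 0 = {ω : ℕ → M | ω m ≠ s} := by
      ext ω
      simp [ZS, Nat.le_zero]
    have h2 : cylSet m p ∩ ZS s m 0 = cylSet m p := by
      rw [h1]
      refine Set.inter_eq_self_of_subset_left (fun ω hω => ?_)
      show ω m ≠ s
      rw [hω m le_rfl]; exact hpm
    have h3 : gfun c s (p m) 0 = 1 := by
      haveI := c.prob (p m)
      refine le_antisymm prob_le_one ?_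
      rw [← c.start (p m)]
      apply measure_mono
      intro ω hω i hi
      have : i = 0 := Nat.le_zero.mp hi
      rw [this, hω]
      exact hpm
    rw [h2, h3, mul_one]
  | succ k ih =>
    intro x m p hpm
    -- the recursion for g
    have ghave : ∀ w : M, w ≠ s → gfun c s w (k + 1) =
        ∑' z : {z : M // z ≠ s}, c.K w z.val * gfun c s z.val k := by
      intro w hw
      have e0 : gfun c s w (k + 1) = c.P w (ZS s 0 (k + 1)) := by
        rw [ZS_zero_eq]; rfl
      have e1 : c.P w (ZS s 0 (k + 1)) = c.P w (cylSet 0 (fun _ => w) ∩ ZS s 0 (k + 1)) := by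
        rw [cylSet_zero, ← inter_start c hms w _ (measSet_ZS hms s 0 (k + 1))]
      have e2 := ZS_decomp s 0 k (fun _ => w) hw
      have e3 : c.P w (cylSet 0 (fun _ => w) ∩ ZS s 0 (k + 1)) =
          ∑' z : {z : M // z ≠ s},
            c.P w (cylSet (0 + 1) (Function.update (fun _ => w) (0 + 1) z.val) ∩
              ZS s (0 + 1) k) := by
        rw [e2]
        exact measure_iUnion (ZS_decomp_disj s 0 k _)
          (fun z => ((measSet_cyl hms _ _).inter (measSet_ZS hms _ _ _)))
      have e4 : ∀ z : {z : M // z ≠ s},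
          c.P w (cylSet (0 + 1) (Function.update (fun _ => w) (0 + 1) z.val) ∩
            ZS s (0 + 1) k) = c.K w z.val * gfun c s z.val k := by
        intro z
        have h := ih w (0 + 1) (Function.update (fun _ => w) (0 + 1) z.val)
          (by rw [Function.update_self]; exact z.prop)
        rw [Function.update_self] at h
        rw [h]
        have hmk := cyl_markov c w (Function.update (fun _ => w) (0 + 1) z.val) 0
        rw [Function.update_self, Function.update_of_ne (by omega : (0:ℕ) ≠ 0 + 1)] at hmk
        rw [hmk]
        have : cylSet 0 (Function.update (fun _ => w) (0 + 1) z.val) =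
            cylSet 0 (fun _ => w) := cylSet_update_eq 0 (0 + 1) (by omega) _ _
        rw [this, cylSet_zero, c.start w, one_mul]
      rw [e0, e1, e3]
      exact tsum_congr e4
    -- main computation
    have hdec := ZS_decomp s m k p hpm
    have h1 : c.P x (cylSet m p ∩ ZS s m (k + 1)) =
        ∑' z : {z : M // z ≠ s},
          c.P x (cylSet (m + 1) (Function.update p (m + 1) z.val) ∩ ZS s (m + 1) k) := by
      rw [hdec]
      exact measure_iUnion (ZS_decomp_disj s m k p)
        (fun z => ((measSet_cyl hms _ _).inter (measSet_ZS hms _ _ _)))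
    have h2 : ∀ z : {z : M // z ≠ s},
        c.P x (cylSet (m + 1) (Function.update p (m + 1) z.val) ∩ ZS s (m + 1) k) =
          c.P x (cylSet m p) * (c.K (p m) z.val * gfun c s z.val k) := by
      intro z
      have h := ih x (m + 1) (Function.update p (m + 1) z.val)
        (by rw [Function.update_self]; exact z.prop)
      rw [Function.update_self] at h
      rw [h]
      have hmk := cyl_markov c x (Function.update p (m + 1) z.val) m
      rw [Function.update_self, Function.update_of_ne (by omega : m ≠ m + 1),
        cylSet_update_eq m (m + 1) (by omega)] at hmk
      rw [hmk, mul_assoc]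
    rw [h1, tsum_congr h2, ENNReal.tsum_mul_left, ghave (p m) hpm]

/-- Padding of a finite word. -/
def padv (m : ℕ) (v : Fin (m + 1) → M) : ℕ → M := fun j => v ⟨min j m, by omega⟩

lemma padv_agree (m : ℕ) (ω : ℕ → M) (i : ℕ) (hi : i ≤ m) :
    padv m (fun j : Fin (m + 1) => ω j.val) i = ω i := by
  simp only [padv]
  congr 1
  omega

/-- Decomposition of a past-determined event into cylinders. -/
lemma det_decomp {m : ℕ} {B : Set (ℕ → M)}
    (hdet : ∀ ω ω', (∀ i ≤ m, ω i = ω' i) → ω ∈ B → ω' ∈ B) :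
    B = ⋃ v : {v : Fin (m + 1) → M // padv m v ∈ B}, cylSet m (padv m v.val) := by
  ext ω
  constructor
  · intro hω
    have hpad : padv m (fun j : Fin (m + 1) => ω j.val) ∈ B := by
      refine hdet ω _ (fun i hi => (padv_agree m ω i hi).symm) hω
    refine Set.mem_iUnion.mpr ⟨⟨_, hpad⟩, fun i hi => (padv_agree m ω i hi).symm⟩
  · intro hω
    obtain ⟨v, hv⟩ := Set.mem_iUnion.mp hω
    exact hdet (padv m v.val) ω (fun i hi => (hv i hi).symm) v.prop

lemma det_disj (m : ℕ) (B : Set (ℕ → M)) :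
    Pairwise (Function.onFun Disjoint fun v : {v : Fin (m + 1) → M // padv m v ∈ B} =>
      cylSet m (padv m v.val)) := by
  intro v v' hvv
  rw [Function.onFun, Set.disjoint_left]
  intro ω h1 h2
  apply hvv
  refine Subtype.ext (funext fun i => ?_)
  have e1 := h1 i.val (by omega)
  have e2 := h2 i.val (by omega)
  have : padv m v.val i.val = padv m v'.val i.val := by rw [← e1, ← e2]
  simpa [padv, Nat.min_eq_left (by omega : i.val ≤ m), Fin.eta] using this

/-- Markov property for past-determined events (MP0). -/
lemma MP0 (c : Chain M) (hms : ∀ S : Set M, MeasurableSet S) (s : M) {m : ℕ}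
    {B : Set (ℕ → M)} (hdet : ∀ ω ω', (∀ i ≤ m, ω i = ω' i) → ω ∈ B → ω' ∈ B)
    {z : M} (hz : z ≠ s) (hBz : B ⊆ {ω | ω m = z}) (x : M) (k : ℕ) :
    c.P x (B ∩ ZS s m k) = c.P x B * gfun c s z k := by
  have hB := det_decomp hdet
  have hvm : ∀ v : {v : Fin (m + 1) → M // padv m v ∈ B}, padv m v.val m = z :=
    fun v => hBz v.prop
  calc c.P x (B ∩ ZS s m k)
      = c.P x (⋃ v : {v : Fin (m + 1) → M // padv m v ∈ B},
          (cylSet m (padv m v.val) ∩ ZS s m k)) := by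
        conv_lhs => rw [hB]
        rw [Set.iUnion_inter]
    _ = ∑' v : {v : Fin (m + 1) → M // padv m v ∈ B},
          c.P x (cylSet m (padv m v.val) ∩ ZS s m k) := by
        refine measure_iUnion ?_ (fun v => (measSet_cyl hms _ _).inter (measSet_ZS hms _ _ _))
        intro v v' hvv
        exact ((det_disj m B) hvv).mono Set.inter_subset_left Set.inter_subset_left
    _ = ∑' v : {v : Fin (m + 1) → M // padv m v ∈ B},
          c.P x (cylSet m (padv m v.val)) * gfun c s z k := by
        refine tsum_congr fun v => ?_
        have := cyl_ZS c hms s k x m (padv m v.val) (by rw [hvm v]; exact hz)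
        rw [hvm v] at this
        exact this
    _ = (∑' v : {v : Fin (m + 1) → M // padv m v ∈ B},
          c.P x (cylSet m (padv m v.val))) * gfun c s z k := ENNReal.tsum_mul_right
    _ = c.P x B * gfun c s z k := by
        rw [← measure_iUnion (det_disj m B) (fun v => measSet_cyl hms _ _), ← hB]

/-! ### Hitting and cover time layer-cake identities -/

lemma hitTime_le_iff {y : M} {ω : ℕ → M} {m : ℕ} :
    hitTime {y} ω ≤ (m : ℝ≥0∞) ↔ ∃ i ≤ m, ω i = y := by
  constructor
  · intro h
    by_contra hno
    push_neg at hno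
    have hlb : ((m : ℝ≥0∞) + 1) ≤ hitTime {y} ω := by
      refine le_iInf₂ fun n hn => ?_
      have hnm : ¬ n ≤ m := fun hc => hno n hc hn
      have : m + 1 ≤ n := by omega
      exact_mod_cast Nat.cast_le.mpr this
    have hcontra := hlb.trans h
    have : (m : ℝ≥0∞) < (m : ℝ≥0∞) + 1 :=
      ENNReal.lt_add_right (ENNReal.natCast_ne_top m) one_ne_zero
    exact absurd hcontra (by simpa using this.not_ge)
  · rintro ⟨i, hi, hy⟩
    exact le_trans (iInf₂_le i hy) (by exact_mod_cast Nat.cast_le.mpr hi)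

lemma lt_hitTime_iff {y : M} {ω : ℕ → M} {k : ℕ} :
    (k : ℝ≥0∞) < hitTime {y} ω ↔ ∀ i ≤ k, ω i ≠ y := by
  rw [← not_le, hitTime_le_iff]
  push_neg
  rfl

lemma hitTime_eq_top {y : M} {ω : ℕ → M} (h : ∀ i, ω i ≠ y) : hitTime {y} ω = ⊤ := by
  rw [hitTime, iInf_eq_top]
  intro n
  rw [iInf_eq_top]
  intro hn
  exact absurd hn (h n)

lemma hitTime_cases (y : M) (ω : ℕ → M) :
    (∃ N : ℕ, hitTime {y} ω = N) ∨ hitTime {y} ω = ⊤ := by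
  classical
  by_cases h : ∃ n, ω n = y
  · left
    refine ⟨Nat.find h, le_antisymm (iInf₂_le (Nat.find h) (Nat.find_spec h)) ?_⟩
    refine le_iInf₂ fun n hn => ?_
    exact_mod_cast Nat.cast_le.mpr (Nat.find_min' h hn)
  · right
    push_neg at h
    exact hitTime_eq_top h

lemma tsum_ite_lt_nat (N : ℕ) :
    ∑' k : ℕ, (if k < N then (1 : ℝ≥0∞) else 0) = N := by
  rw [tsum_eq_sum (s := Finset.range N) (fun k hk => if_neg (by simpa using hk))]
  rw [Finset.sum_congr rfl (fun k hk => if_pos (Finset.mem_range.mp hk))]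
  simp

lemma tsum_indicator_lt (v : ℝ≥0∞) (hv : (∃ N : ℕ, v = N) ∨ v = ⊤) :
    ∑' k : ℕ, (if (k : ℝ≥0∞) < v then (1 : ℝ≥0∞) else 0) = v := by
  classical
  rcases hv with ⟨N, rfl⟩ | rfl
  · have hcong : ∀ k : ℕ, (if (k : ℝ≥0∞) < (N : ℝ≥0∞) then (1 : ℝ≥0∞) else 0)
        = (if k < N then (1 : ℝ≥0∞) else 0) := by
      intro k
      by_cases h : k < N
      · rw [if_pos h, if_pos (by exact_mod_cast h)]
      · rw [if_neg h, if_neg (by exact_mod_cast h)]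
    rw [tsum_congr hcong]
    exact tsum_ite_lt_nat N
  · rw [tsum_congr (fun k => if_pos (ENNReal.natCast_lt_top k))]
    exact ENNReal.tsum_const_eq_top_of_ne_zero one_ne_zero

/-- The set of paths on which some element of `F` is unvisited up to time `k`. -/
def CkSet (F : Finset M) (k : ℕ) : Set (ℕ → M) := {ω | ∃ y ∈ F, ∀ i ≤ k, ω i ≠ y}

lemma measSet_Ck (hms : ∀ S : Set M, MeasurableSet S) (F : Finset M) (k : ℕ) :
    MeasurableSet (CkSet F k) := by
  have : CkSet F k = ⋃ y ∈ F, {ω : ℕ → M | ∀ i ≤ k, ω i ≠ y} := by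
    ext ω; simp [CkSet]
  rw [this]
  exact MeasurableSet.biUnion F.countable_toSet (fun y _ => measSet_noS hms y k)

lemma covT_le_iff {F : Finset M} {ω : ℕ → M} {k : ℕ} :
    coverTime (↑F) ω ≤ (k : ℝ≥0∞) ↔ ω ∉ CkSet F k := by
  rw [coverTime, iSup₂_le_iff]
  constructor
  · rintro h ⟨y, hy, hno⟩
    obtain ⟨i, hi, hiy⟩ := hitTime_le_iff.mp (h y (Finset.mem_coe.mpr hy))
    exact hno i hi hiy
  · intro h y hy
    rw [hitTime_le_iff]
    by_contra hno
    push_neg at hno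
    exact h ⟨y, Finset.mem_coe.mp hy, hno⟩

lemma lt_covT_iff {F : Finset M} {ω : ℕ → M} {k : ℕ} :
    (k : ℝ≥0∞) < coverTime (↑F) ω ↔ ω ∈ CkSet F k := by
  rw [← not_le, covT_le_iff, not_not]

lemma covT_cases (F : Finset M) (ω : ℕ → M) :
    (∃ N : ℕ, coverTime (↑F) ω = N) ∨ coverTime (↑F) ω = ⊤ := by
  classical
  by_cases hfin : ∀ y ∈ F, ∃ n, ω n = y
  · left
    choose! f hf using hfin
    have hcov : ∃ n : ℕ, ∀ y ∈ F, ∃ i ≤ n, ω i = y :=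
      ⟨F.sup f, fun y hy => ⟨f y, Finset.le_sup hy, hf y hy⟩⟩
    refine ⟨Nat.find hcov, le_antisymm ?_ ?_⟩
    · refine covT_le_iff.mpr ?_
      rintro ⟨y, hy, hno⟩
      obtain ⟨i, hi, hiy⟩ := Nat.find_spec hcov y hy
      exact hno i hi hiy
    · rcases Nat.eq_zero_or_pos (Nat.find hcov) with h0 | hpos
      · rw [h0, Nat.cast_zero]; exact zero_le
      · have hmin : ¬ ∀ y ∈ F, ∃ i ≤ Nat.find hcov - 1, ω i = y :=
          Nat.find_min hcov (by omega)
        push_neg at hmin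
        obtain ⟨y, hy, hno⟩ := hmin
        have h1 : ((Nat.find hcov : ℕ) : ℝ≥0∞) ≤ hitTime {y} ω := by
          refine le_iInf₂ fun n hn => ?_
          have h2 : ¬ n ≤ Nat.find hcov - 1 := fun hc => hno n hc hn
          exact Nat.cast_le.mpr (by omega)
        refine h1.trans ?_
        rw [coverTime]
        exact le_biSup (fun x => hitTime {x} ω) (Finset.mem_coe.mpr hy)
  · right
    push_neg at hfin
    obtain ⟨y, hy, hno⟩ := hfin
    have h1 : hitTime {y} ω = ⊤ := hitTime_eq_top hno
    refine top_unique ?_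
    rw [← h1, coverTime]
    exact le_biSup (fun x => hitTime {x} ω) (Finset.mem_coe.mpr hy)

lemma covT_eq_tsum (F : Finset M) (ω : ℕ → M) :
    coverTime (↑F) ω
      = ∑' k : ℕ, Set.indicator (CkSet F k) (fun _ => (1 : ℝ≥0∞)) ω := by
  have hind : ∀ k : ℕ, Set.indicator (CkSet F k) (fun _ => (1 : ℝ≥0∞)) ω
      = if (k : ℝ≥0∞) < coverTime (↑F) ω then (1 : ℝ≥0∞) else 0 := by
    intro k
    by_cases h : ω ∈ CkSet F k
    · rw [Set.indicator_of_mem h, if_pos (lt_covT_iff.mpr h)]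
    · rw [Set.indicator_of_notMem h, if_neg (fun hc => h (lt_covT_iff.mp hc))]
  rw [tsum_congr hind, tsum_indicator_lt _ (covT_cases F ω)]

lemma E_covT (c : Chain M) (hms : ∀ S : Set M, MeasurableSet S) (x : M) (F : Finset M) :
    E c x (coverTime ↑F) = ∑' k : ℕ, c.P x (CkSet F k) := by
  rw [E]
  rw [lintegral_congr (covT_eq_tsum F)]
  rw [lintegral_tsum (fun k => ((measurable_const).indicator (measSet_Ck hms F k)).aemeasurable)]
  exact tsum_congr fun k => lintegral_indicator_one (measSet_Ck hms F k)

lemma eHit_eq_tsum (c : Chain M) (hms : ∀ S : Set M, MeasurableSet S) (z s : M) :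
    eHit c z s = ∑' k : ℕ, gfun c s z k := by
  have hser : ∀ ω : ℕ → M, hitTime {s} ω
      = ∑' k : ℕ, Set.indicator {ω' : ℕ → M | ∀ i ≤ k, ω' i ≠ s} (fun _ => (1 : ℝ≥0∞)) ω := by
    intro ω
    have hind : ∀ k : ℕ, Set.indicator {ω' : ℕ → M | ∀ i ≤ k, ω' i ≠ s}
        (fun _ => (1 : ℝ≥0∞)) ω = if (k : ℝ≥0∞) < hitTime {s} ω then (1 : ℝ≥0∞) else 0 := by
      intro k
      by_cases h : ω ∈ {ω' : ℕ → M | ∀ i ≤ k, ω' i ≠ s}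
      · rw [Set.indicator_of_mem h, if_pos (lt_hitTime_iff.mpr h)]
      · rw [Set.indicator_of_notMem h, if_neg (fun hc => h (lt_hitTime_iff.mp hc))]
    rw [tsum_congr hind, tsum_indicator_lt _ (hitTime_cases s ω)]
  rw [eHit, E, lintegral_congr hser,
    lintegral_tsum (fun k => ((measurable_const).indicator (measSet_noS hms s k)).aemeasurable)]
  exact tsum_congr fun k => lintegral_indicator_one (measSet_noS hms s k)

/-! ### The sets V, D, E and the per-element step bound -/

def NSet (s : M) (k : ℕ) : Set (ℕ → M) := {ω | ∀ i ≤ k, ω i ≠ s}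

def VS (F' : Finset M) (k : ℕ) : Set (ℕ → M) := (CkSet F' k)ᶜ

def DS (F' : Finset M) : ℕ → Set (ℕ → M)
  | 0 => VS F' 0
  | (m + 1) => VS F' (m + 1) \ VS F' m

def BS (F' : Finset M) (s : M) (m : ℕ) (z : M) : Set (ℕ → M) :=
  (DS F' m ∩ NSet s m) ∩ {ω | ω m = z}

def ES (F' : Finset M) (s : M) : Set (ℕ → M) := ⋃ m : ℕ, (DS F' m ∩ NSet s m)

lemma measSet_NSet (hms : ∀ S : Set M, MeasurableSet S) (s : M) (k : ℕ) :
    MeasurableSet (NSet s k) := measSet_noS hms s k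

lemma measSet_VS (hms : ∀ S : Set M, MeasurableSet S) (F' : Finset M) (k : ℕ) :
    MeasurableSet (VS F' k) := (measSet_Ck hms F' k).compl

lemma measSet_DS (hms : ∀ S : Set M, MeasurableSet S) (F' : Finset M) (m : ℕ) :
    MeasurableSet (DS F' m) := by
  cases m with
  | zero => exact measSet_VS hms F' 0
  | succ m => exact (measSet_VS hms F' (m + 1)).diff (measSet_VS hms F' m)

lemma measSet_BS (hms : ∀ S : Set M, MeasurableSet S) (F' : Finset M) (s : M) (m : ℕ)
    (z : M) : MeasurableSet (BS F' s m z) :=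
  ((measSet_DS hms F' m).inter (measSet_NSet hms s m)).inter (measSet_coord hms m {z})

lemma measSet_ES (hms : ∀ S : Set M, MeasurableSet S) (F' : Finset M) (s : M) :
    MeasurableSet (ES F' s) :=
  MeasurableSet.iUnion fun m => (measSet_DS hms F' m).inter (measSet_NSet hms s m)

lemma mem_VS {F' : Finset M} {k : ℕ} {ω : ℕ → M} :
    ω ∈ VS F' k ↔ ∀ y ∈ F', ∃ i ≤ k, ω i = y := by
  rw [VS, Set.mem_compl_iff, CkSet, Set.mem_setOf_eq]
  push_neg
  rfl

lemma VS_mono {F' : Finset M} {k k' : ℕ} (h : k ≤ k') : VS F' k ⊆ VS F' k' := by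
  intro ω hω
  rw [mem_VS] at hω ⊢
  intro y hy
  obtain ⟨i, hi, hiy⟩ := hω y hy
  exact ⟨i, hi.trans h, hiy⟩

lemma DS_subset_VS (F' : Finset M) (m : ℕ) : DS F' m ⊆ VS F' m := by
  cases m with
  | zero => exact subset_rfl
  | succ m => exact Set.diff_subset

lemma VS_eq_biUnion (F' : Finset M) (n : ℕ) :
    VS F' n = ⋃ m ∈ Finset.range (n + 1), DS F' m := by
  induction n with
  | zero => simp [DS]
  | succ n ihn =>
    rw [Finset.range_add_one, Finset.set_biUnion_insert, ← ihn]
    have hD : DS F' (n + 1) = VS F' (n + 1) \ VS F' n := rfl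
    rw [hD, Set.diff_union_of_subset (VS_mono (Nat.le_succ n))]

lemma DS_disj (F' : Finset M) : Pairwise (Function.onFun Disjoint (DS F')) := by
  have key : ∀ m j, m ≤ j → Disjoint (DS F' m) (DS F' (j + 1)) := by
    intro m j hmj
    rw [Set.disjoint_left]
    intro ω hm hj1
    exact hj1.2 (VS_mono hmj (DS_subset_VS F' m hm))
  intro a b hab
  rcases lt_or_gt_of_ne hab with h | h
  · obtain ⟨j, rfl⟩ : ∃ j, b = j + 1 := ⟨b - 1, by omega⟩
    exact key a j (by omega)
  · obtain ⟨j, rfl⟩ : ∃ j, a = j + 1 := ⟨a - 1, by omega⟩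
    exact (key b j (by omega)).symm

lemma CkSet_det {F : Finset M} {k : ℕ} {ω ω' : ℕ → M} (h : ∀ i ≤ k, ω i = ω' i) :
    ω ∈ CkSet F k → ω' ∈ CkSet F k := by
  rintro ⟨y, hy, hno⟩
  exact ⟨y, hy, fun i hi hcon => hno i hi ((h i hi).trans hcon)⟩

lemma VS_det {F' : Finset M} {k : ℕ} {ω ω' : ℕ → M} (h : ∀ i ≤ k, ω i = ω' i) :
    ω ∈ VS F' k → ω' ∈ VS F' k :=
  fun hV hC => hV (CkSet_det (fun i hi => (h i hi).symm) hC)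

lemma DS_det {F' : Finset M} {m : ℕ} {ω ω' : ℕ → M} (h : ∀ i ≤ m, ω i = ω' i) :
    ω ∈ DS F' m → ω' ∈ DS F' m := by
  cases m with
  | zero => exact VS_det h
  | succ m =>
    rintro ⟨h1, h2⟩
    refine ⟨VS_det h h1, fun hc => h2 ?_⟩
    exact VS_det (fun i hi => (h i (hi.trans (Nat.le_succ m))).symm) hc

lemma DS_mem_F {F' : Finset M} (hne : F'.Nonempty) (m : ℕ) :
    DS F' m ⊆ {ω | ω m ∈ F'} := by
  cases m with
  | zero =>
    intro ω hω
    obtain ⟨y0, hy0⟩ := hne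
    obtain ⟨i, hi, hiy⟩ := (mem_VS.mp hω) y0 hy0
    have hi0 : i = 0 := Nat.le_zero.mp hi
    subst hi0
    show ω 0 ∈ F'
    rw [hiy]; exact hy0
  | succ m =>
    rintro ω ⟨h1, h2⟩
    have h2' : ω ∈ CkSet F' m := by
      by_contra hcon
      exact h2 hcon
    obtain ⟨y, hy, hno⟩ := h2'
    obtain ⟨i, hi, hiy⟩ := (mem_VS.mp h1) y hy
    have him : i = m + 1 := by
      by_contra hcon
      exact hno i (by omega) hiy
    subst him
    show ω (m + 1) ∈ F'
    rw [hiy]; exact hy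

/-- Double-sum reindexing. -/
lemma tsum_range_swap (a : ℕ → ℕ → ℝ≥0∞) :
    ∑' k : ℕ, ∑ m ∈ Finset.range (k + 1), a m k = ∑' m : ℕ, ∑' j : ℕ, a m (m + j) := by
  classical
  have h1 : ∀ k, ∑ m ∈ Finset.range (k + 1), a m k
      = ∑' m : ℕ, (if m ≤ k then a m k else 0) := by
    intro k
    have h2 : ∑' m : ℕ, (if m ≤ k then a m k else 0)
        = ∑ m ∈ Finset.range (k + 1), (if m ≤ k then a m k else 0) :=
      tsum_eq_sum (fun m hm => if_neg (by simp only [Finset.mem_range] at hm; omega))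
    rw [h2]
    exact Finset.sum_congr rfl fun m hm =>
      (if_pos (by simp only [Finset.mem_range] at hm; omega)).symm
  rw [tsum_congr h1, ENNReal.tsum_comm]
  refine tsum_congr fun m => ?_
  have hinj : Function.Injective (fun j : ℕ => m + j) := fun a b h => by
    have h' : m + a = m + b := h
    omega
  have hsupp : Function.support (fun k => if m ≤ k then a m k else 0)
      ⊆ Set.range (fun j : ℕ => m + j) := by
    intro k hk
    simp only [Function.mem_support] at hk
    have hmk : m ≤ k := by
      by_contra hc
      exact hk (if_neg hc)
    exact ⟨k - m, show m + (k - m) = k by omega⟩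
  calc (∑' k : ℕ, if m ≤ k then a m k else 0)
      = ∑' j : ℕ, (if m ≤ m + j then a m (m + j) else 0) :=
        (Function.Injective.tsum_eq hinj hsupp).symm
    _ = ∑' j : ℕ, a m (m + j) := tsum_congr fun j => by
        have hj : m ≤ m + j := by omega
        simp [hj]

/-- The per-element step bound. -/
lemma step_bound [DecidableEq M] (c : Chain M) (hms : ∀ S : Set M, MeasurableSet S) {A : Set M}
    {t : ℝ≥0∞} (ht : ∀ z ∈ A, ∀ u ∈ A, eHit c z u ≤ t) {F : Finset M} (hFA : ↑F ⊆ A)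
    {s : M} (hs : s ∈ F) (hFne : (F.erase s).Nonempty) (x : M) :
    E c x (coverTime ↑F) ≤ E c x (coverTime ↑(F.erase s)) + t * c.P x (ES (F.erase s) s) := by
  classical
  set F' := F.erase s with hF'
  have hsetid : ∀ k, CkSet F k = CkSet F' k ∪ (VS F' k ∩ NSet s k) := by
    intro k
    ext ω
    constructor
    · rintro ⟨y, hy, hno⟩
      by_cases hC : ω ∈ CkSet F' k
      · exact Or.inl hC
      · refine Or.inr ⟨hC, ?_⟩
        by_cases hys : y = s
        · subst hys; exact hno
        · exact absurd ⟨y, Finset.mem_erase.mpr ⟨hys, hy⟩, hno⟩ hC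
    · rintro (⟨y, hy, hno⟩ | ⟨hV, hNS⟩)
      · exact ⟨y, Finset.mem_of_mem_erase hy, hno⟩
      · exact ⟨s, hs, hNS⟩
  have hmeasid : ∀ k, c.P x (CkSet F k)
      = c.P x (CkSet F' k) + c.P x (VS F' k ∩ NSet s k) := by
    intro k
    rw [hsetid k]
    refine measure_union ?_ ((measSet_VS hms F' k).inter (measSet_NSet hms s k))
    rw [Set.disjoint_left]
    intro ω hω hω2
    exact hω2.1 hω
  have hE : E c x (coverTime ↑F)
      = E c x (coverTime ↑F') + ∑' k, c.P x (VS F' k ∩ NSet s k) := by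
    rw [E_covT c hms x F, E_covT c hms x F', ← ENNReal.tsum_add]
    exact tsum_congr hmeasid
  rw [hE]
  refine add_le_add le_rfl ?_
  have h1 : ∀ k, c.P x (VS F' k ∩ NSet s k)
      = ∑ m ∈ Finset.range (k + 1), c.P x (DS F' m ∩ NSet s k) := by
    intro k
    have hsk : VS F' k ∩ NSet s k = ⋃ m ∈ Finset.range (k + 1), (DS F' m ∩ NSet s k) := by
      rw [VS_eq_biUnion, Set.iUnion₂_inter]
    rw [hsk]
    refine measure_biUnion_finset ?_
      (fun m _ => (measSet_DS hms F' m).inter (measSet_NSet hms s k))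
    intro a _ b _ hab
    exact ((DS_disj F') hab).mono Set.inter_subset_left Set.inter_subset_left
  have h2 : ∑' k, c.P x (VS F' k ∩ NSet s k)
      = ∑' m, ∑' j, c.P x (DS F' m ∩ NSet s (m + j)) := by
    rw [tsum_congr h1]
    exact tsum_range_swap _
  have h3 : ∀ m j, c.P x (DS F' m ∩ NSet s (m + j))
      = ∑ z ∈ F', c.P x (BS F' s m z ∩ ZS s m j) := by
    intro m j
    have hset : DS F' m ∩ NSet s (m + j) = ⋃ z ∈ F', (BS F' s m z ∩ ZS s m j) := by
      ext ω
      constructor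
      · rintro ⟨hD, hNS⟩
        have hz : ω m ∈ F' := DS_mem_F hFne m hD
        exact Set.mem_biUnion hz
          ⟨⟨⟨hD, fun i hi => hNS i (by omega)⟩, rfl⟩, fun i hi => hNS (m + i) (by omega)⟩
      · intro hω
        obtain ⟨z, hz, hmem⟩ := Set.mem_iUnion₂.mp hω
        obtain ⟨⟨⟨hD, hNSm⟩, hzm⟩, hZS⟩ := hmem
        refine ⟨hD, fun i hi => ?_⟩
        by_cases him : i ≤ m
        · exact hNSm i him
        · have hieq : i = m + (i - m) := by omega
          rw [hieq]
          exact hZS (i - m) (by omega)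
    rw [hset]
    refine measure_biUnion_finset ?_
      (fun z _ => (measSet_BS hms F' s m z).inter (measSet_ZS hms s m j))
    intro a _ b _ hab
    rw [Function.onFun, Set.disjoint_left]
    rintro ω ⟨⟨⟨-, -⟩, ham⟩, -⟩ ⟨⟨⟨-, -⟩, hbm⟩, -⟩
    exact hab (ham.symm.trans hbm)
  have h4 : ∀ m (z : M), z ∈ F' → ∀ j, c.P x (BS F' s m z ∩ ZS s m j)
      = c.P x (BS F' s m z) * gfun c s z j := by
    intro m z hz j
    refine MP0 c hms s ?_ (Finset.ne_of_mem_erase hz) ?_ x j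
    · rintro ω ω' h ⟨⟨hD, hNS⟩, hzm⟩
      exact ⟨⟨DS_det h hD, fun i hi hcon => hNS i hi ((h i hi).trans hcon)⟩,
        ((h m le_rfl).symm.trans hzm)⟩
    · exact fun ω hω => hω.2
  have hDB : ∀ m, DS F' m ∩ NSet s m = ⋃ z ∈ F', BS F' s m z := by
    intro m
    ext ω
    constructor
    · rintro ⟨hD, hNS⟩
      exact Set.mem_biUnion (DS_mem_F hFne m hD) ⟨⟨hD, hNS⟩, rfl⟩
    · intro hω
      obtain ⟨z, hz, hmem⟩ := Set.mem_iUnion₂.mp hω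
      exact hmem.1
  have h5 : ∀ m, ∑' j, c.P x (DS F' m ∩ NSet s (m + j))
      ≤ t * c.P x (DS F' m ∩ NSet s m) := by
    intro m
    calc ∑' j, c.P x (DS F' m ∩ NSet s (m + j))
        = ∑' j, ∑ z ∈ F', c.P x (BS F' s m z ∩ ZS s m j) := tsum_congr fun j => h3 m j
      _ = ∑ z ∈ F', ∑' j, c.P x (BS F' s m z ∩ ZS s m j) :=
          Summable.tsum_finsetSum (fun z _ => ENNReal.summable)
      _ = ∑ z ∈ F', c.P x (BS F' s m z) * eHit c z s := by
          refine Finset.sum_congr rfl fun z hz => ?_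
          rw [tsum_congr (h4 m z hz), ENNReal.tsum_mul_left, eHit_eq_tsum c hms z s]
      _ ≤ ∑ z ∈ F', c.P x (BS F' s m z) * t := by
          refine Finset.sum_le_sum fun z hz => ?_
          refine mul_le_mul_right ?_ _
          exact ht z (hFA (Finset.mem_coe.mpr (Finset.mem_of_mem_erase hz))) s
            (hFA (Finset.mem_coe.mpr hs))
      _ = (∑ z ∈ F', c.P x (BS F' s m z)) * t := (Finset.sum_mul _ _ _).symm
      _ = c.P x (DS F' m ∩ NSet s m) * t := by
          congr 1
          rw [hDB m]
          refine (measure_biUnion_finset ?_ (fun z _ => measSet_BS hms F' s m z)).symm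
          intro a _ b _ hab
          rw [Function.onFun, Set.disjoint_left]
          rintro ω ⟨⟨-, -⟩, ham⟩ ⟨⟨-, -⟩, hbm⟩
          exact hab (ham.symm.trans hbm)
      _ = t * c.P x (DS F' m ∩ NSet s m) := mul_comm _ _
  calc ∑' k, c.P x (VS F' k ∩ NSet s k)
      = ∑' m, ∑' j, c.P x (DS F' m ∩ NSet s (m + j)) := h2
    _ ≤ ∑' m, t * c.P x (DS F' m ∩ NSet s m) := ENNReal.tsum_le_tsum h5
    _ = t * ∑' m, c.P x (DS F' m ∩ NSet s m) := ENNReal.tsum_mul_left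
    _ = t * c.P x (ES F' s) := by
        congr 1
        refine (measure_iUnion ?_
          (fun m => (measSet_DS hms F' m).inter (measSet_NSet hms s m))).symm
        intro a b hab
        exact ((DS_disj F') hab).mono Set.inter_subset_left Set.inter_subset_left

lemma ES_disjoint [DecidableEq M] (F : Finset M) {s s' : M} (hs : s ∈ F) (hs' : s' ∈ F) (hne : s ≠ s') :
    Disjoint (ES (F.erase s) s) (ES (F.erase s') s') := by
  rw [Set.disjoint_left]
  intro ω h1 h2
  obtain ⟨m, hm⟩ := Set.mem_iUnion.mp h1
  obtain ⟨m', hm'⟩ := Set.mem_iUnion.mp h2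
  obtain ⟨hD, hNS⟩ := hm
  obtain ⟨hD', hNS'⟩ := hm'
  have hV := DS_subset_VS _ _ hD
  have hV' := DS_subset_VS _ _ hD'
  obtain ⟨i, hi, hiy⟩ := (mem_VS.mp hV) s' (Finset.mem_erase.mpr ⟨hne.symm, hs'⟩)
  obtain ⟨i', hi', hiy'⟩ := (mem_VS.mp hV') s (Finset.mem_erase.mpr ⟨hne, hs⟩)
  have hgt : m' < i := by
    by_contra hc
    push_neg at hc
    exact hNS' i hc hiy
  have hgt' : m < i' := by
    by_contra hc
    push_neg at hc
    exact hNS i' hc hiy'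
  omega

/-! ### The harmonic bound and Matthews' induction -/

def Hh (n : ℕ) : ℝ≥0∞ := ∑ j ∈ Finset.range n, ((j : ℝ≥0∞) + 1)⁻¹

lemma main_ind [DecidableEq M] (c : Chain M) (hms : ∀ S : Set M, MeasurableSet S) {A : Set M}
    {t : ℝ≥0∞} (ht : ∀ z ∈ A, ∀ u ∈ A, eHit c z u ≤ t) :
    ∀ (n : ℕ) (F : Finset M), F.card = n → ↑F ⊆ A → F.Nonempty →
      ∀ x ∈ A, E c x (coverTime ↑F) ≤ Hh n * t := by
  intro n
  induction n using Nat.strong_induction_on with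
  | _ n ih =>
    intro F hcard hFA hFne x hx
    subst hcard
    rcases Nat.lt_or_ge F.card 2 with hn2 | hn2
    · -- singleton case
      have hc1 : F.card = 1 := by
        have := Finset.card_pos.mpr hFne
        omega
      obtain ⟨s, rfl⟩ := Finset.card_eq_one.mp hc1
      have hcov1 : ∀ ω : ℕ → M, coverTime (↑({s} : Finset M)) ω = hitTime {s} ω := by
        intro ω
        rw [coverTime]
        simp
      have hEe : E c x (coverTime ↑({s} : Finset M)) = eHit c x s := by
        rw [eHit, E, E]
        exact lintegral_congr hcov1
      rw [hEe, hc1]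
      have hH : Hh 1 = 1 := by simp [Hh]
      rw [hH, one_mul]
      exact ht x hx s (hFA (by simp))
    · -- inductive case
      have hcard1 : ∀ s ∈ F, (F.erase s).card = F.card - 1 :=
        fun s hs => Finset.card_erase_of_mem hs
      have hstep : ∀ s ∈ F, E c x (coverTime ↑F)
          ≤ Hh (F.card - 1) * t + t * c.P x (ES (F.erase s) s) := by
        intro s hs
        have hne' : (F.erase s).Nonempty := Finset.card_pos.mp (by rw [hcard1 s hs]; omega)
        refine (step_bound c hms ht hFA hs hne' x).trans ?_
        refine add_le_add ?_ le_rfl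
        exact ih (F.card - 1) (by omega) (F.erase s) (hcard1 s hs)
          ((Finset.coe_subset.mpr (Finset.erase_subset s F)).trans hFA) hne' x hx
      have e3 : ∑ s ∈ F, c.P x (ES (F.erase s) s) ≤ 1 := by
        haveI := c.prob x
        have hbu := measure_biUnion_finset (μ := c.P x) (s := F)
          (f := fun s => ES (F.erase s) s)
          (fun a _ b _ hab => ES_disjoint F ‹a ∈ F› ‹b ∈ F› hab)
          (fun s _ => measSet_ES hms _ _)
        rw [← hbu]
        exact prob_le_one
      have hsum : (F.card : ℝ≥0∞) * E c x (coverTime ↑F)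
          ≤ (F.card : ℝ≥0∞) * (Hh (F.card - 1) * t) + t := by
        have e1 : ∑ _s ∈ F, E c x (coverTime ↑F)
            = (F.card : ℝ≥0∞) * E c x (coverTime ↑F) := by
          rw [Finset.sum_const, nsmul_eq_mul]
        have e2 : ∑ s ∈ F, (Hh (F.card - 1) * t + t * c.P x (ES (F.erase s) s))
            = (F.card : ℝ≥0∞) * (Hh (F.card - 1) * t)
              + t * ∑ s ∈ F, c.P x (ES (F.erase s) s) := by
          rw [Finset.sum_add_distrib, Finset.sum_const, nsmul_eq_mul, ← Finset.mul_sum]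
        calc (F.card : ℝ≥0∞) * E c x (coverTime ↑F)
            = ∑ _s ∈ F, E c x (coverTime ↑F) := e1.symm
          _ ≤ ∑ s ∈ F, (Hh (F.card - 1) * t + t * c.P x (ES (F.erase s) s)) :=
              Finset.sum_le_sum (fun s hs => hstep s hs)
          _ = (F.card : ℝ≥0∞) * (Hh (F.card - 1) * t)
              + t * ∑ s ∈ F, c.P x (ES (F.erase s) s) := e2
          _ ≤ (F.card : ℝ≥0∞) * (Hh (F.card - 1) * t) + t * 1 :=
              add_le_add le_rfl (mul_le_mul_right e3 t)
          _ = (F.card : ℝ≥0∞) * (Hh (F.card - 1) * t) + t := by rw [mul_one]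
      obtain ⟨m, hm⟩ : ∃ m, F.card = m + 1 := ⟨F.card - 1, by omega⟩
      have hm1 : F.card - 1 = m := by omega
      rw [hm1] at hsum
      rw [hm] at hsum
      rw [hm]
      have hne0 : ((m + 1 : ℕ) : ℝ≥0∞) ≠ 0 := by
        exact_mod_cast Nat.succ_ne_zero m
      have hnetop : ((m + 1 : ℕ) : ℝ≥0∞) ≠ ⊤ := ENNReal.natCast_ne_top _
      rw [← ENNReal.mul_le_mul_iff_right hne0 hnetop]
      refine hsum.trans ?_
      have hH : Hh (m + 1) = Hh m + ((m : ℝ≥0∞) + 1)⁻¹ := by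
        rw [Hh, Hh, Finset.sum_range_succ]
      have hcast : ((m + 1 : ℕ) : ℝ≥0∞) = (m : ℝ≥0∞) + 1 := by push_cast; ring
      have hne0' : (m : ℝ≥0∞) + 1 ≠ 0 :=
        (lt_of_lt_of_le zero_lt_one (le_add_self : (1 : ℝ≥0∞) ≤ (m : ℝ≥0∞) + 1)).ne'
      have hnetop' : (m : ℝ≥0∞) + 1 ≠ ⊤ :=
        ENNReal.add_ne_top.mpr ⟨ENNReal.natCast_ne_top m, ENNReal.one_ne_top⟩
      have hc : ((m : ℝ≥0∞) + 1) * ((Hh m + ((m : ℝ≥0∞) + 1)⁻¹) * t)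
          = ((m : ℝ≥0∞) + 1) * (Hh m * t) + t := by
        rw [add_mul (Hh m) (((m : ℝ≥0∞) + 1)⁻¹) t, mul_add,
          ← mul_assoc ((m : ℝ≥0∞) + 1) (((m : ℝ≥0∞) + 1)⁻¹) t,
          ENNReal.mul_inv_cancel hne0' hnetop', one_mul]
      rw [hH, hcast, hc]

lemma Hh_le (n : ℕ) (hn : 0 < n) : Hh n ≤ ENNReal.ofReal (1 + Real.log n) := by
  induction n with
  | zero => exact absurd hn (lt_irrefl 0)
  | succ m ihm =>
    rcases Nat.eq_zero_or_pos m with rfl | hm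
    · have h1 : Hh 1 = 1 := by simp [Hh]
      rw [h1]
      simp [Real.log_one]
    · have ih := ihm hm
      have hstep : Hh (m + 1) = Hh m + ((m : ℝ≥0∞) + 1)⁻¹ := by
        rw [Hh, Hh, Finset.sum_range_succ]
      have hinv : ((m : ℝ≥0∞) + 1)⁻¹ = ENNReal.ofReal ((m : ℝ) + 1)⁻¹ := by
        rw [ENNReal.ofReal_inv_of_pos (by positivity)]
        congr 1
        rw [ENNReal.ofReal_add (by positivity) zero_le_one, ENNReal.ofReal_natCast,
          ENNReal.ofReal_one]
      have hm0 : (0 : ℝ) < m := by exact_mod_cast hm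
      have hlog : (0 : ℝ) ≤ 1 + Real.log m := by
        have := Real.log_nonneg (show (1 : ℝ) ≤ m by exact_mod_cast hm)
        linarith
      have hreal : 1 + Real.log m + ((m : ℝ) + 1)⁻¹ ≤ 1 + Real.log ((m : ℝ) + 1) := by
        have key := Real.log_le_sub_one_of_pos (show (0 : ℝ) < m / (m + 1) by positivity)
        have hd : Real.log ((m : ℝ) / (m + 1)) = Real.log m - Real.log (m + 1) :=
          Real.log_div (ne_of_gt hm0) (by positivity)
        have harith : (m : ℝ) / (m + 1) - 1 = -((m : ℝ) + 1)⁻¹ := by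
          field_simp
          ring
        rw [hd, harith] at key
        linarith
      rw [hstep, hinv]
      calc Hh m + ENNReal.ofReal ((m : ℝ) + 1)⁻¹
          ≤ ENNReal.ofReal (1 + Real.log m) + ENNReal.ofReal ((m : ℝ) + 1)⁻¹ :=
            add_le_add ih le_rfl
        _ = ENNReal.ofReal (1 + Real.log m + ((m : ℝ) + 1)⁻¹) :=
            (ENNReal.ofReal_add hlog (by positivity)).symm
        _ ≤ ENNReal.ofReal (1 + Real.log ((m : ℝ) + 1)) := ENNReal.ofReal_le_ofReal hreal
        _ = ENNReal.ofReal (1 + Real.log ((m + 1 : ℕ) : ℝ)) := by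
            push_cast
            ring_nf


end Aux

/-- Matthews' upper bound. For every finite subset `A` of `M`,
`cov(A) ≤ (1 + log |A|) · max_{x,y ∈ A} E_x T(y)`. -/
theorem matthews_upper_bound {M : Type*} [Countable M] [MeasurableSpace M]
    (c : Chain M) (hirr : Irreducible c) (hpos : PositiveRecurrent c)
    {A : Set M} (hA : A.Finite) (hAne : A.Nonempty) :
    cov c A ≤ ENNReal.ofReal (1 + Real.log A.ncard) * ⨆ x ∈ A, ⨆ y ∈ A, eHit c x y := by
  classical
  have hms : ∀ S : Set M, MeasurableSet S := measurableSet_of_irreducible c hirr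
  set t := ⨆ x ∈ A, ⨆ y ∈ A, eHit c x y with hts
  have ht : ∀ z ∈ A, ∀ u ∈ A, eHit c z u ≤ t := by
    intro z hz u hu
    calc eHit c z u ≤ ⨆ y ∈ A, eHit c z y := le_biSup _ hu
      _ ≤ t := le_biSup (fun x => ⨆ y ∈ A, eHit c x y) hz
  have hcoe : (↑hA.toFinset : Set M) = A := hA.coe_toFinset
  have hcard : A.ncard = hA.toFinset.card := Set.ncard_eq_toFinset_card A hA
  have hFne : hA.toFinset.Nonempty := (Set.Finite.toFinset_nonempty hA).mpr hAne
  rw [cov]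
  refine iSup₂_le fun x hx => ?_
  have h1 : E c x (coverTime A) = E c x (coverTime ↑hA.toFinset) := by rw [hcoe]
  rw [h1]
  refine (main_ind c hms ht hA.toFinset.card hA.toFinset rfl (hcoe.subset) hFne x hx).trans ?_
  have hH := Hh_le hA.toFinset.card (Finset.card_pos.mpr hFne)
  calc Hh hA.toFinset.card * t
      ≤ ENNReal.ofReal (1 + Real.log hA.toFinset.card) * t := mul_le_mul_left hH t
    _ = ENNReal.ofReal (1 + Real.log A.ncard) * t := by rw [hcard]

end

end CoverTime
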